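/- Let {(ξₙ, νₙ)} be a bounded sequence in H¹(ℝ) × H¹(ℝ) such that for some R > 0, sup_{y∈ℝ} ∫_{y−R}^{y+R} |νₙ(x)|² dx → 0 as n → ∞. Then ∫_ℝ ξₙ(x) νₙ²(x) dx → 0 as n → ∞. -/

import Mathlib

open MeasureTheory Filter

lemma cs_int {μ : Measure ℝ} (f g : ℝ → ℝ) (hfm : AEStronglyMeasurable f μ)
    (hgm : AEStronglyMeasurable g μ) (hf : Integrable (fun x => f x ^ 2) μ)
    (hg : Integrable (fun x => g x ^ 2) μ) :
    ∫ x, |f x * g x| ∂μ ≤ Real.sqrt (∫ x, f x ^ 2 ∂μ) * Real.sqrt (∫ x, g x ^ 2 ∂μ) := by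
  have hf2 : MemLp f 2 μ := (memLp_two_iff_integrable_sq hfm).2 hf
  have hg2 : MemLp g 2 μ := (memLp_two_iff_integrable_sq hgm).2 hg
  have hpq : (2:ℝ).HolderConjugate 2 := by constructor <;> norm_num
  have h := integral_mul_norm_le_Lp_mul_Lq (μ := μ) hpq (by simpa using hf2) (by simpa using hg2)
  have e1 : ∀ x : ℝ, ‖f x‖ ^ (2:ℝ) = f x ^ 2 := fun x => by
    rw [show ((2:ℝ)) = ((2:ℕ):ℝ) by norm_num, Real.rpow_natCast]; simp [sq_abs, Real.norm_eq_abs]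
  calc ∫ x, |f x * g x| ∂μ = ∫ x, ‖f x‖ * ‖g x‖ ∂μ := by
        simp [abs_mul, Real.norm_eq_abs]
    _ ≤ (∫ x, ‖f x‖ ^ (2:ℝ) ∂μ) ^ (1/(2:ℝ)) * (∫ x, ‖g x‖ ^ (2:ℝ) ∂μ) ^ (1/(2:ℝ)) := h
    _ = Real.sqrt (∫ x, f x ^ 2 ∂μ) * Real.sqrt (∫ x, g x ^ 2 ∂μ) := by
        have e2 : ∀ x : ℝ, ‖g x‖ ^ (2:ℝ) = g x ^ 2 := fun x => by
          rw [show ((2:ℝ)) = ((2:ℕ):ℝ) by norm_num, Real.rpow_natCast]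
          simp [sq_abs, Real.norm_eq_abs]
        simp only [e1, e2]
        rw [Real.sqrt_eq_rpow, Real.sqrt_eq_rpow]

lemma int_mul {μ : Measure ℝ} (f g : ℝ → ℝ) (hfm : AEStronglyMeasurable f μ)
    (hgm : AEStronglyMeasurable g μ) (hf : Integrable (fun x => f x ^ 2) μ)
    (hg : Integrable (fun x => g x ^ 2) μ) :
    Integrable (fun x => f x * g x) μ := by
  refine Integrable.mono' ((hf.add hg).div_const 2) (hfm.mul hgm) ?_
  filter_upwards with x
  have h1 : ‖f x * g x‖ = |f x| * |g x| := by rw [Real.norm_eq_abs, abs_mul]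
  rw [h1, Pi.add_apply]
  nlinarith [sq_nonneg (|f x| - |g x|), sq_abs (f x), sq_abs (g x)]

lemma ptwise (ν : ℝ → ℝ) (hd : Differentiable ℝ ν)
    (h2 : Integrable (fun x => ν x ^ 2)) (h2' : Integrable (fun x => deriv ν x ^ 2))
    (R : ℝ) (hR : 0 < R) (x : ℝ) :
    ν x ^ 2 ≤ (∫ z in Set.Ioo (x - R) (x + R), ν z ^ 2) / (2 * R)
      + ∫ z in Set.Ioo (x - R) (x + R), |2 * ν z * deriv ν z| := by
  set I := Set.Ioo (x - R) (x + R) with hI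
  have hνm : AEStronglyMeasurable ν (volume : Measure ℝ) :=
    hd.continuous.aestronglyMeasurable
  have hdm : AEStronglyMeasurable (deriv ν) (volume : Measure ℝ) :=
    (measurable_deriv ν).aestronglyMeasurable
  have hint : Integrable (fun t => 2 * ν t * deriv ν t) := by
    refine Integrable.mono' (h2.add h2') ((hνm.const_mul 2).mul hdm) ?_
    filter_upwards with t
    have : ‖2 * ν t * deriv ν t‖ = 2 * (|ν t| * |deriv ν t|) := by
      rw [Real.norm_eq_abs, abs_mul, abs_mul]; norm_num; ring
    rw [this, Pi.add_apply]
    nlinarith [sq_nonneg (|ν t| - |deriv ν t|), sq_abs (ν t), sq_abs (deriv ν t)]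
  have hvol : (volume : Measure ℝ) I = ENNReal.ofReal (2 * R) := by
    rw [hI, Real.volume_Ioo]; ring_nf
  set D := ∫ z in I, |2 * ν z * deriv ν z| with hD
  have hDnn : 0 ≤ D := setIntegral_nonneg measurableSet_Ioo (fun z _ => abs_nonneg _)
  -- FTC
  have hftc : ∀ z : ℝ, ν x ^ 2 - ν z ^ 2 = ∫ t in z..x, 2 * ν t * deriv ν t := by
    intro z
    have h := intervalIntegral.integral_eq_sub_of_hasDerivAt
      (f := fun t => ν t ^ 2) (f' := fun t => 2 * ν t * deriv ν t) (a := z) (b := x)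
      (fun t _ => by simpa using ((hd t).hasDerivAt.fun_pow 2)) hint.intervalIntegrable
    linarith [h]
  have hstep : ∀ z ∈ I, ν x ^ 2 ≤ ν z ^ 2 + D := by
    intro z hz
    have h1 : ν x ^ 2 - ν z ^ 2 ≤ |∫ t in z..x, 2 * ν t * deriv ν t| := by
      rw [hftc z]; exact le_abs_self _
    have h2s : Set.uIoc z x ⊆ I := by
      intro t ht
      rcases Set.mem_uIoc.1 ht with ⟨h3, h4⟩ | ⟨h3, h4⟩ <;>
        constructor <;> simp only [hI] at hz ⊢ <;> cases' hz with hz1 hz2 <;> linarith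
    have h2 : |∫ t in z..x, 2 * ν t * deriv ν t| ≤ D := by
      calc |∫ t in z..x, 2 * ν t * deriv ν t|
          ≤ ∫ t in Set.uIoc z x, |2 * ν t * deriv ν t| := by
            have h5 := intervalIntegral.norm_integral_le_integral_norm_uIoc
                (f := fun t => 2 * ν t * deriv ν t) (a := z) (b := x) (μ := volume)
            simp only [Real.norm_eq_abs] at h5
            exact h5
        _ ≤ D := by
            refine setIntegral_mono_set hint.abs.integrableOn ?_
              (HasSubset.Subset.eventuallyLE h2s)
            filter_upwards with t using abs_nonneg _
    linarith
  -- integrate over z ∈ I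
  have hmono : ∫ z in I, (ν x ^ 2 : ℝ) ≤ ∫ z in I, (ν z ^ 2 + D) := by
    refine setIntegral_mono_on (integrableOn_const ?_)
      (h2.integrableOn.add (integrableOn_const ?_)) measurableSet_Ioo hstep
    · rw [hvol]; exact ENNReal.ofReal_ne_top
    · rw [hvol]; exact ENNReal.ofReal_ne_top
  have hL : ∫ z in I, (ν x ^ 2 : ℝ) = 2 * R * ν x ^ 2 := by
    rw [setIntegral_const, measureReal_def, hvol, ENNReal.toReal_ofReal (by positivity), smul_eq_mul]
  have hRt : ∫ z in I, (ν z ^ 2 + D) = (∫ z in I, ν z ^ 2) + 2 * R * D := by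
    rw [integral_add h2.integrableOn (integrableOn_const (by
      rw [hvol]; exact ENNReal.ofReal_ne_top))]
    rw [setIntegral_const, measureReal_def, hvol, ENNReal.toReal_ofReal (by positivity), smul_eq_mul]
  rw [hL, hRt] at hmono
  rw [div_add' _ _ _ (by positivity : (2*R : ℝ) ≠ 0), le_div_iff₀ (by positivity)]
  linarith

/-- If {(ξₙ, νₙ)} is bounded in H¹(ℝ)×H¹(ℝ) and sup_y ∫_{y−R}^{y+R} νₙ² → 0 for some R > 0,
    then ∫ ξₙ νₙ² → 0. -/
theorem stmt_12 (ξ ν : ℕ → ℝ → ℝ)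
    (hdξ : ∀ n, Differentiable ℝ (ξ n)) (hdν : ∀ n, Differentiable ℝ (ν n))
    (hiξ : ∀ n, Integrable (fun x => (ξ n x) ^ 2) ∧ Integrable (fun x => (deriv (ξ n) x) ^ 2))
    (hiν : ∀ n, Integrable (fun x => (ν n x) ^ 2) ∧ Integrable (fun x => (deriv (ν n) x) ^ 2))
    (M : ℝ)
    (hbdd : ∀ n, (∫ x, ((ξ n x) ^ 2 + (deriv (ξ n) x) ^ 2
        + (ν n x) ^ 2 + (deriv (ν n) x) ^ 2)) ≤ M)
    (R : ℝ) (hR : 0 < R)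
    (hvan : ∀ ε > (0 : ℝ), ∃ N : ℕ, ∀ n ≥ N, ∀ y : ℝ,
      (∫ x in Set.Ioo (y - R) (y + R), (ν n x) ^ 2) ≤ ε) :
    Tendsto (fun n => ∫ x, ξ n x * (ν n x) ^ 2) atTop (nhds 0) := by
  -- individual bounds
  have hsplit : ∀ n, (∫ x, (ξ n x) ^ 2) ≤ M ∧ (∫ x, (ν n x) ^ 2) ≤ M ∧
      (∫ x, (deriv (ν n) x) ^ 2) ≤ M := by
    intro n
    have h1 := (hiξ n).1; have h2 := (hiξ n).2; have h3 := (hiν n).1; have h4 := (hiν n).2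
    have e1 := integral_add h1 h2
    have e2 := integral_add (h1.add h2) h3
    have e3 := integral_add ((h1.add h2).add h3) h4
    simp only [Pi.add_apply] at e1 e2 e3
    have hb := hbdd n
    rw [e3, e2, e1] at hb
    have n1 : 0 ≤ ∫ x, (ξ n x) ^ 2 := integral_nonneg fun x => sq_nonneg _
    have n2 : 0 ≤ ∫ x, (deriv (ξ n) x) ^ 2 := integral_nonneg fun x => sq_nonneg _
    have n3 : 0 ≤ ∫ x, (ν n x) ^ 2 := integral_nonneg fun x => sq_nonneg _
    have n4 : 0 ≤ ∫ x, (deriv (ν n) x) ^ 2 := integral_nonneg fun x => sq_nonneg _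
    exact ⟨by linarith, by linarith, by linarith⟩
  have hM : 0 ≤ M := by
    have := hsplit 0
    have n1 : 0 ≤ ∫ x, (ξ 0 x) ^ 2 := integral_nonneg fun x => sq_nonneg _
    linarith [this.1]
  rw [Metric.tendsto_atTop]
  intro δ hδ
  -- choose ε via continuity
  set g : ℝ → ℝ := fun ε => M * Real.sqrt (ε / (2 * R) + 2 * (Real.sqrt ε * Real.sqrt M)) with hg
  have hgc : ContinuousAt g 0 := by
    apply Continuous.continuousAt
    exact continuous_const.mul (Real.continuous_sqrt.comp
      ((continuous_id.div_const _).add (continuous_const.mul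
        (Real.continuous_sqrt.mul continuous_const))))
  have hg0 : g 0 = 0 := by simp [hg]
  obtain ⟨η, hη, hηd⟩ := Metric.continuousAt_iff.1 hgc δ hδ
  set ε := η / 2 with hε
  have hεpos : 0 < ε := by positivity
  have hgε : g ε < δ := by
    have := hηd (x := ε) (by rw [Real.dist_eq, sub_zero, abs_of_pos hεpos]; linarith)
    rwa [hg0, Real.dist_eq, sub_zero, abs_of_nonneg (by positivity)] at this
  obtain ⟨N, hN⟩ := hvan ε hεpos
  refine ⟨N, fun n hn => ?_⟩
  rw [Real.dist_eq, sub_zero]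
  -- measurability
  have hξm : AEStronglyMeasurable (ξ n) (volume : Measure ℝ) :=
    (hdξ n).continuous.aestronglyMeasurable
  have hνm : AEStronglyMeasurable (ν n) (volume : Measure ℝ) :=
    (hdν n).continuous.aestronglyMeasurable
  have hdνm : AEStronglyMeasurable (deriv (ν n)) (volume : Measure ℝ) :=
    (measurable_deriv (ν n)).aestronglyMeasurable
  -- pointwise sup bound
  set S := ε / (2 * R) + 2 * (Real.sqrt ε * Real.sqrt M) with hS
  have hSnn : 0 ≤ S := by positivity
  have hpt : ∀ x, (ν n x) ^ 2 ≤ S := by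
    intro x
    have h := ptwise (ν n) (hdν n) (hiν n).1 (hiν n).2 R hR x
    have hA : (∫ z in Set.Ioo (x - R) (x + R), (ν n z) ^ 2) ≤ ε := hN n hn x
    have hAnn : 0 ≤ ∫ z in Set.Ioo (x - R) (x + R), (ν n z) ^ 2 :=
      setIntegral_nonneg measurableSet_Ioo fun z _ => sq_nonneg _
    have hD : (∫ z in Set.Ioo (x - R) (x + R), |2 * ν n z * deriv (ν n) z|)
        ≤ 2 * (Real.sqrt ε * Real.sqrt M) := by
      have he : ∀ z : ℝ, |2 * ν n z * deriv (ν n) z| = 2 * |ν n z * deriv (ν n) z| := by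
        intro z; rw [mul_assoc, abs_mul]; norm_num
      rw [show (fun z => |2 * ν n z * deriv (ν n) z|)
          = fun z => 2 * |ν n z * deriv (ν n) z| from funext he]
      rw [integral_const_mul]
      have hcs := cs_int (μ := volume.restrict (Set.Ioo (x - R) (x + R)))
        (ν n) (deriv (ν n)) hνm.restrict hdνm.restrict
        (hiν n).1.integrableOn (hiν n).2.integrableOn
      have hsub : (∫ z in Set.Ioo (x - R) (x + R), (deriv (ν n) z) ^ 2)
          ≤ ∫ z, (deriv (ν n) z) ^ 2 :=
        setIntegral_le_integral (hiν n).2 (Filter.Eventually.of_forall fun z => sq_nonneg _)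
      have h6 : Real.sqrt (∫ z in Set.Ioo (x - R) (x + R), (ν n z) ^ 2) ≤ Real.sqrt ε :=
        Real.sqrt_le_sqrt hA
      have h7 : Real.sqrt (∫ z in Set.Ioo (x - R) (x + R), (deriv (ν n) z) ^ 2)
          ≤ Real.sqrt M := Real.sqrt_le_sqrt (le_trans hsub (hsplit n).2.2)
      have h8 := mul_le_mul h6 h7 (Real.sqrt_nonneg _) (Real.sqrt_nonneg _)
      nlinarith [hcs, h8, Real.sqrt_nonneg (∫ z in Set.Ioo (x - R) (x + R), (ν n z) ^ 2),
        setIntegral_nonneg (μ := (volume : Measure ℝ)) measurableSet_Ioo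
          (fun z (_ : z ∈ Set.Ioo (x - R) (x + R)) => abs_nonneg (ν n z * deriv (ν n) z))]
    calc (ν n x) ^ 2 ≤ _ := h
      _ ≤ S := by
          rw [hS]
          have : (∫ z in Set.Ioo (x - R) (x + R), (ν n z) ^ 2) / (2 * R) ≤ ε / (2 * R) :=
            div_le_div_of_nonneg_right ?_ (by positivity)
          · linarith
          · exact hA
  -- main estimate
  have habs : ∀ x : ℝ, |ξ n x * (ν n x) ^ 2| ≤ Real.sqrt S * |ξ n x * ν n x| := by
    intro x
    have h1 : |ν n x| ≤ Real.sqrt S := by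
      rw [← Real.sqrt_sq_eq_abs]; exact Real.sqrt_le_sqrt (hpt x)
    calc |ξ n x * (ν n x) ^ 2| = |ξ n x * ν n x| * |ν n x| := by
          rw [← abs_mul]; ring_nf
      _ ≤ |ξ n x * ν n x| * Real.sqrt S := by
          exact mul_le_mul_of_nonneg_left h1 (abs_nonneg _)
      _ = Real.sqrt S * |ξ n x * ν n x| := by ring
  have hprod : Integrable (fun x => ξ n x * ν n x) :=
    int_mul (ξ n) (ν n) hξm hνm (hiξ n).1 (hiν n).1
  have step1 : |∫ x, ξ n x * (ν n x) ^ 2| ≤ ∫ x, Real.sqrt S * |ξ n x * ν n x| := by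
    calc |∫ x, ξ n x * (ν n x) ^ 2| ≤ ∫ x, |ξ n x * (ν n x) ^ 2| := by
          simpa only [Real.norm_eq_abs] using
            norm_integral_le_integral_norm (μ := volume) (fun x => ξ n x * (ν n x) ^ 2)
      _ ≤ ∫ x, Real.sqrt S * |ξ n x * ν n x| :=
          integral_mono_of_nonneg (Filter.Eventually.of_forall fun x => abs_nonneg _)
            (hprod.abs.const_mul _) (Filter.Eventually.of_forall habs)
  have step2 : ∫ x, Real.sqrt S * |ξ n x * ν n x| ≤ Real.sqrt S * M := by
    rw [integral_const_mul]
    have hcs := cs_int (μ := (volume : Measure ℝ)) (ξ n) (ν n) hξm hνm (hiξ n).1 (hiν n).1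
    have h6 : Real.sqrt (∫ x, (ξ n x) ^ 2) ≤ Real.sqrt M := Real.sqrt_le_sqrt (hsplit n).1
    have h7 : Real.sqrt (∫ x, (ν n x) ^ 2) ≤ Real.sqrt M := Real.sqrt_le_sqrt (hsplit n).2.1
    have h8 : Real.sqrt (∫ x, (ξ n x) ^ 2) * Real.sqrt (∫ x, (ν n x) ^ 2)
        ≤ Real.sqrt M * Real.sqrt M :=
      mul_le_mul h6 h7 (Real.sqrt_nonneg _) (Real.sqrt_nonneg _)
    rw [Real.mul_self_sqrt hM] at h8
    have h9 : (∫ x, |ξ n x * ν n x|) ≤ M := le_trans hcs h8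
    exact mul_le_mul_of_nonneg_left h9 (Real.sqrt_nonneg _)
  calc |∫ x, ξ n x * (ν n x) ^ 2| ≤ Real.sqrt S * M := le_trans step1 step2
    _ = g ε := by rw [hg]; ring
    _ < δ := hgε
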